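/- Let A be a finite-type k-linear abelian category with End(L) ≅ k for all simple objects L. If a simple object L(s) has an injective hull (I,ψ), then for every object X of A, [X : L(s)] = dim_k Hom(X, I). -/
import Mathlib


open CategoryTheory CategoryTheory.Limits

universe v u

namespace StmtAux

variable {A : Type u} [Category.{v} A] [Abelian A]

/-- `CompFactors X l` asserts that `l` is a list of composition factors for `X`. -/
inductive CompFactors : A → List A → Prop
  | nil {X : A} (h : IsZero X) : CompFactors X []
  | cons {X Y L : A} {l : List A} (hL : Simple L) (i : Y ⟶ X) (p : X ⟶ L)
      (w : i ≫ p = 0) (hse : (ShortComplex.mk i p w).ShortExact)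
      (h : CompFactors Y l) : CompFactors X (L :: l)

open Classical in
/-- The multiplicity `[l : L]` : the number of members of `l` isomorphic to `L`. -/
noncomputable def mult (L : A) (l : List A) : ℕ :=
  l.countP (fun M => decide (Nonempty (M ≅ L)))

end StmtAux

open StmtAux

section Aux

open scoped Classical

variable {k : Type*} [Field k] {A : Type u} [Category.{v} A] [Abelian A] [Linear k A]

/-- Any map from a simple object into the injective hull of `L` factors through `ψ`;
hence `Hom(L', I) ≃ Hom(L', L)` and the ranks agree. -/
lemma rank_hom_simple_inj
    (L : A) (hL : Simple L)
    (I : A) (ψ : L ⟶ I) (hψ : Mono ψ)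
    (hess : ∀ (Z : A) (g : I ⟶ Z), Mono (ψ ≫ g) → Mono g)
    (L' : A) (hL' : Simple L') :
    Module.rank k (L' ⟶ I) = Module.rank k (L' ⟶ L) := by
  haveI := hL; haveI := hL'; haveI := hψ
  let c : (L' ⟶ L) →ₗ[k] (L' ⟶ I) := Linear.rightComp k L' ψ
  have hinj : Function.Injective c := by
    intro a b hab
    exact (cancel_mono ψ).mp hab
  have hsurj : Function.Surjective c := by
    intro f
    by_cases hf : f = 0
    · exact ⟨0, by simp [c, hf, Linear.rightComp]⟩
    · haveI : Mono f := mono_of_nonzero_from_simple hf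
      have hcond : ψ ≫ cokernel.π f = 0 := by
        by_contra h
        haveI : Mono (ψ ≫ cokernel.π f) := mono_of_nonzero_from_simple h
        haveI : Mono (cokernel.π f) := hess _ _ this
        exact hf ((cancel_mono (cokernel.π f)).mp (by simp [cokernel.condition]))
      let u : L ⟶ L' := Abelian.monoLift f ψ hcond
      have hu : u ≫ f = ψ := Abelian.monoLift_comp f ψ hcond
      have hune : u ≠ 0 := by
        intro h
        have hz : ψ = 0 := by rw [← hu, h, zero_comp]
        have : 𝟙 L ≫ ψ = 0 ≫ ψ := by simp [hz]
        exact id_nonzero L ((cancel_mono ψ).mp this)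
      haveI : IsIso u := isIso_of_hom_simple hune
      refine ⟨inv u, ?_⟩
      show inv u ≫ ψ = f
      rw [← hu, IsIso.inv_hom_id_assoc]
  exact ((LinearEquiv.ofBijective c ⟨hinj, hsurj⟩).symm.rank_eq)

/-- The rank of `Hom(L', L)` for simple `L'`, `L`. -/
lemma rank_hom_simple_simple
    (hend : ∀ L : A, Simple L → ∀ f : L ⟶ L, ∃ c : k, f = c • 𝟙 L)
    (L : A) (hL : Simple L) (L' : A) (hL' : Simple L') :
    Module.rank k (L' ⟶ L) = (if Nonempty (L' ≅ L) then 1 else 0) := by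
  haveI := hL; haveI := hL'
  by_cases h : Nonempty (L' ≅ L)
  · rw [if_pos h]
    obtain ⟨e⟩ := h
    -- `Hom(L', L) ≃ Hom(L, L)` via precomposition with `e.inv`
    let c : (L ⟶ L) →ₗ[k] (L' ⟶ L) := Linear.leftComp k L e.hom
    have hbij : Function.Bijective c := by
      constructor
      · intro a b hab
        have : e.hom ≫ a = e.hom ≫ b := hab
        exact (cancel_epi e.hom).mp this
      · intro f
        exact ⟨e.inv ≫ f, by simp [c, Linear.leftComp]⟩
    rw [← (LinearEquiv.ofBijective c hbij).rank_eq]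
    have hone : ∀ w : (L ⟶ L), ∃ a : k, a • 𝟙 L = w := by
      intro w
      obtain ⟨a, ha⟩ := hend L hL w
      exact ⟨a, ha.symm⟩
    exact rank_eq_one (𝟙 L) (id_nonzero L) hone
  · rw [if_neg h]
    have hz : ∀ f : L' ⟶ L, f = 0 := by
      intro f
      by_contra hf
      haveI := isIso_of_hom_simple hf
      exact h ⟨asIso f⟩
    haveI : Subsingleton (L' ⟶ L) := ⟨fun a b => by rw [hz a, hz b]⟩
    exact rank_subsingleton' _ _

lemma rank_hom_eq_mult
    (hend : ∀ L : A, Simple L → ∀ f : L ⟶ L, ∃ c : k, f = c • 𝟙 L)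
    (L : A) (hL : Simple L)
    (I : A) (hI : Injective I) (ψ : L ⟶ I) (hψ : Mono ψ)
    (hess : ∀ (Z : A) (g : I ⟶ Z), Mono (ψ ≫ g) → Mono g)
    (X : A) (l : List A) (hl : CompFactors X l) :
    Module.rank k (X ⟶ I) = (mult L l : Cardinal.{v}) := by
  induction hl with
  | nil h =>
    haveI : Subsingleton (_ ⟶ I) := ⟨fun a b => h.eq_of_src a b⟩
    simp [mult, rank_subsingleton' _ _]
  | @cons X Y L' l hL' i p w hse ih IH =>
    haveI := hse.mono_f
    haveI := hse.epi_g
    -- restriction map `f ↦ i ≫ f`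
    let r : (X ⟶ I) →ₗ[k] (Y ⟶ I) := Linear.leftComp k I i
    -- extension map `g ↦ p ≫ g`
    let e : (L' ⟶ I) →ₗ[k] (X ⟶ I) := Linear.leftComp k I p
    have hrsurj : Function.Surjective r := by
      intro g
      exact ⟨Injective.factorThru g i, Injective.comp_factorThru g i⟩
    have heinj : Function.Injective e := by
      intro a b hab
      exact (cancel_epi p).mp hab
    have hrange : LinearMap.range e = LinearMap.ker r := by
      apply le_antisymm
      · rintro f ⟨g, rfl⟩
        show i ≫ p ≫ g = 0
        rw [← Category.assoc, w, zero_comp]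
      · intro f hf
        have hf' : i ≫ f = 0 := hf
        obtain ⟨g, hg⟩ := CokernelCofork.IsColimit.desc' hse.gIsCokernel f hf'
        exact ⟨g, hg⟩
    have hrn := LinearMap.rank_range_add_rank_ker r
    have h1 : Module.rank k (LinearMap.range r) = Module.rank k (Y ⟶ I) := by
      rw [LinearMap.range_eq_top.2 hrsurj, rank_top]
    have h2 : Module.rank k (LinearMap.ker r) = Module.rank k (L' ⟶ I) := by
      rw [← hrange, ← (LinearEquiv.ofInjective e heinj).rank_eq]
    rw [h1, h2] at hrn
    have hm : mult L (L' :: l) = mult L l + (if Nonempty (L' ≅ L) then 1 else 0) := by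
      classical
      simp [mult, List.countP_cons]
    rw [← hrn, IH, hm,
      rank_hom_simple_inj L hL I ψ hψ hess L' hL',
      rank_hom_simple_simple hend L hL L' hL']
    push_cast
    split <;> simp
end Aux

/-- In a finite-type `k`-linear abelian category with scalar
endomorphisms of simple objects, if a simple object `L` has an injective hull
`(I, ψ)`, then for every object `X`, `[X : L] = dim_k Hom(X, I)`. -/
theorem stmt2 (k : Type*) [Field k] (A : Type u) [Category.{v} A] [Abelian A]
    [Linear k A]
    (hfl : ∀ X : A, ∃ l : List A, CompFactors X l)
    (hend : ∀ L : A, Simple L → ∀ f : L ⟶ L, ∃ c : k, f = c • 𝟙 L)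
    (L : A) (hL : Simple L)
    (I : A) (hI : Injective I) (ψ : L ⟶ I) (hψ : Mono ψ)
    (hess : ∀ (Z : A) (g : I ⟶ Z), Mono (ψ ≫ g) → Mono g)
    (X : A) (l : List A) (hl : CompFactors X l) :
    mult L l = Module.finrank k (X ⟶ I) := by
  have h := rank_hom_eq_mult hend L hL I hI ψ hψ hess X l hl
  exact (Module.finrank_eq_of_rank_eq h).symm
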